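/- The rewriting system on words over the alphabet {H, E} ∪ {W_i : i ∈ ℕ} with rules H·W_i → W_{i+1}·H, H·E → E·H, and W_i·W_j → W_j·W_i whenever i < j, is terminating. -/

import Mathlib

/-- Letters of the alphabet: `H`, `E` and `W i` for `i : ℕ`. -/
inductive Letter
  | H : Letter
  | E : Letter
  | W : ℕ → Letter

open Letter

/-- One rewriting step: a two-letter factor matching the left-hand side of a rule
is replaced by the right-hand side, anywhere in the word. -/
inductive Step : List Letter → List Letter → Prop
  | hw (u v : List Letter) (i : ℕ) :
      Step (u ++ [H, W i] ++ v) (u ++ [W (i + 1), H] ++ v)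
  | he (u v : List Letter) :
      Step (u ++ [H, E] ++ v) (u ++ [E, H] ++ v)
  | ww (u v : List Letter) (i j : ℕ) (hij : i < j) :
      Step (u ++ [W i, W j] ++ v) (u ++ [W j, W i] ++ v)

namespace StepTermAux

def isH : Letter → Bool
  | .H => true
  | _ => false

def wlt : Letter → Letter → Bool
  | .W a, .W b => decide (a < b)
  | _, _ => false

def mu1 : List Letter → ℕ
  | [] => 0
  | x :: t => (if isH x then t.length + 1 else 0) + mu1 t

def mu2 : List Letter → ℕ
  | [] => 0
  | x :: t => t.countP (wlt x) + mu2 t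

lemma mu1_mid (a b : Letter) (v : List Letter) : ∀ u : List Letter,
    mu1 (u ++ a :: b :: v) = mu1 u + u.countP isH * (v.length + 2)
      + (if isH a then v.length + 2 else 0) + (if isH b then v.length + 1 else 0) + mu1 v := by
  intro u
  induction u with
  | nil =>
    simp only [List.nil_append, mu1, List.length_cons, List.countP_nil]
    by_cases ha : isH a <;> by_cases hb : isH b <;> simp [ha, hb] <;> ring
  | cons x t ih =>
    simp only [List.cons_append, mu1, List.countP_cons, List.length_append,
      List.length_cons, List.append_eq, ih]
    by_cases ha : isH a <;> by_cases hb : isH b <;> by_cases h : isH x <;>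
      simp [ha, hb, h] <;> ring

lemma mu2_mid (a b : Letter) (v : List Letter) : ∀ u : List Letter,
    mu2 (u ++ a :: b :: v) = mu2 u + (u.countP (fun x => wlt x a)) + (u.countP (fun x => wlt x b))
      + (u.map (fun x => v.countP (wlt x))).sum
      + (if wlt a b then 1 else 0) + v.countP (wlt a) + v.countP (wlt b) + mu2 v := by
  intro u
  induction u with
  | nil =>
    simp only [List.nil_append, mu2, List.countP_cons, List.countP_nil, List.map_nil,
      List.sum_nil]
    split_ifs <;> omega
  | cons x t ih =>
    simp only [List.cons_append, mu2, List.countP_cons, List.countP_append,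
      List.map_cons, List.sum_cons, List.append_eq, ih]
    split_ifs <;> omega

lemma mu2_le (l : List Letter) : mu2 l ≤ l.length * l.length := by
  induction l with
  | nil => simp [mu2]
  | cons x t ih =>
    have h1 : t.countP (wlt x) ≤ t.length := List.countP_le_length
    simp only [mu2, List.length_cons]
    nlinarith

def mu (l : List Letter) : ℕ := mu1 l * (l.length * l.length + 1) + mu2 l

lemma mu_lt_of_mu1 {x y : List Letter} (hlen : y.length = x.length)
    (h1 : mu1 y + 1 = mu1 x) : mu y < mu x := by
  have h2 := mu2_le y
  unfold mu
  rw [hlen] at h2 ⊢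
  nlinarith [Nat.zero_le (mu2 x)]

lemma mu_lt_of_mu2 {x y : List Letter} (hlen : y.length = x.length)
    (h1 : mu1 y = mu1 x) (h2 : mu2 y < mu2 x) : mu y < mu x := by
  unfold mu
  rw [hlen, h1]
  omega

lemma step_mu {x y : List Letter} (h : Step x y) : mu y < mu x := by
  cases h with
  | hw u v i =>
    apply mu_lt_of_mu1 (by simp)
    rw [show u ++ [H, W i] ++ v = u ++ H :: W i :: v by simp,
        show u ++ [W (i+1), H] ++ v = u ++ W (i+1) :: H :: v by simp,
        mu1_mid, mu1_mid]
    simp [isH]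
    ring
  | he u v =>
    apply mu_lt_of_mu1 (by simp)
    rw [show u ++ [H, E] ++ v = u ++ H :: E :: v by simp,
        show u ++ [E, H] ++ v = u ++ E :: H :: v by simp,
        mu1_mid, mu1_mid]
    simp [isH]
    ring
  | ww u v i j hij =>
    apply mu_lt_of_mu2 (by simp)
    · rw [show u ++ [W i, W j] ++ v = u ++ W i :: W j :: v by simp,
          show u ++ [W j, W i] ++ v = u ++ W j :: W i :: v by simp,
          mu1_mid, mu1_mid]
      simp [isH]
    · rw [show u ++ [W i, W j] ++ v = u ++ W i :: W j :: v by simp,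
          show u ++ [W j, W i] ++ v = u ++ W j :: W i :: v by simp,
          mu2_mid, mu2_mid]
      have hji : wlt (W j) (W i) = false := by simp [wlt]; omega
      have hij' : wlt (W i) (W j) = true := by simp [wlt, hij]
      simp [hji, hij']
      omega

end StepTermAux

open StepTermAux in
/-- The rewriting system is terminating: there is no infinite sequence of
rewriting steps. -/
theorem step_terminating :
    ∀ f : ℕ → List Letter, ¬ (∀ n, Step (f n) (f (n + 1))) := by
  intro f hf
  have hdec : ∀ n, mu (f (n + 1)) < mu (f n) := fun n => step_mu (hf n)
  have key : ∀ n, mu (f n) + n ≤ mu (f 0) := by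
    intro n
    induction n with
    | zero => simp
    | succ k ih => have := hdec k; omega
  have := key (mu (f 0) + 1)
  omega
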